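/- Let p ≥ 2 be an integer and let a, b, c be integers satisfying −p < 2a ≤ p, −p < 2b ≤ p, −p < 2c ≤ p, and c ≡ a − b (mod p). Then |a − b| ≤ (p − 1) · |c|. -/
import Mathlib


/-- The pointwise estimate behind White's Proposition: if `a`, `b`, `c` all lie in the
interval `(−p/2, p/2]` and `c ≡ a − b (mod p)`, then `|a − b| ≤ (p − 1)|c|`. -/
theorem statement6 (p a b c : ℤ) (hp : 2 ≤ p)
    (ha₁ : -p < 2 * a) (ha₂ : 2 * a ≤ p)
    (hb₁ : -p < 2 * b) (hb₂ : 2 * b ≤ p)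
    (hc₁ : -p < 2 * c) (hc₂ : 2 * c ≤ p)
    (hcong : c ≡ a - b [ZMOD p]) :
    |a - b| ≤ (p - 1) * |c| := by
  obtain ⟨k, hk⟩ := hcong.dvd
  -- hk : a - b - c = p * k
  have hklb : -1 ≤ k := by nlinarith
  have hkub : k ≤ 1 := by nlinarith
  interval_cases k
  · -- a - b = c - p
    have hc0 : 0 < c := by nlinarith
    have hab : a - b < 0 := by nlinarith
    rw [abs_of_neg hab, abs_of_pos hc0]
    nlinarith
  · have hab : a - b = c := by linarith
    rw [hab]
    nlinarith [abs_nonneg c]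
  · -- a - b = c + p
    have hc0 : c < 0 := by nlinarith
    have hab : 0 < a - b := by nlinarith
    rw [abs_of_pos hab, abs_of_neg hc0]
    nlinarith
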